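/- Let K ≥ 1 and for each k ∈ {1,…,K} let V_k ⊂ ℝ be a finite nonempty set. Let B be a real M × D' matrix, W a real D' × K matrix, and b ∈ ℝ^{D'}, and suppose that for every i ∈ {1,…,K} the quantity α_i := Σ_{d=1}^{D'} (Σ_{m=1}^{M} B_{m,d}) W_{d,i} is strictly positive. Then for v ∈ V₁ × ⋯ × V_K the following are equivalent: (i) v maximizes ⟨B(Wv + b), 1⟩ = Σ_{m=1}^M (B(Wv+b))_m over V₁ × ⋯ × V_K; (ii) v_k = max V_k for every k; (iii) v maximizes Σ_{k=1}^K v_k over V₁ × ⋯ × V_K. In particular the greedy per-coordinate maximization coincides with the global maximization through the subsequent affine layer. -/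

import Mathlib

open Matrix

/-- if every effective column sum
`α_i = Σ_d (Σ_m B_{m,d}) W_{d,i}` is strictly positive, then for
`v ∈ V₁ × ⋯ × V_K` the following are equivalent: (i) `v` maximizes
`⟨B(Wv + b), 1⟩`; (ii) `v_k = max V_k` for all `k`; (iii) `v` maximizes
`Σ_k v_k`. -/
theorem local_global_inference (K M D' : ℕ) (hK : 1 ≤ K)
    (V : Fin K → Finset ℝ) (hne : ∀ k, (V k).Nonempty)
    (B : Matrix (Fin M) (Fin D') ℝ) (W : Matrix (Fin D') (Fin K) ℝ)
    (b : Fin D' → ℝ)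
    (hα : ∀ i : Fin K, 0 < ∑ d, (∑ m, B m d) * W d i)
    (v : Fin K → ℝ) (hv : ∀ k, v k ∈ V k) :
    ((∀ u : Fin K → ℝ, (∀ k, u k ∈ V k) →
        ∑ m, (B *ᵥ (W *ᵥ u + b)) m ≤ ∑ m, (B *ᵥ (W *ᵥ v + b)) m)
      ↔ (∀ k, v k = (V k).max' (hne k)))
    ∧ ((∀ k, v k = (V k).max' (hne k))
      ↔ (∀ u : Fin K → ℝ, (∀ k, u k ∈ V k) → ∑ k, u k ≤ ∑ k, v k)) := by
  set α : Fin K → ℝ := fun i => ∑ d, (∑ m, B m d) * W d i with hαdef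
  -- expansion of the objective
  have expand : ∀ u : Fin K → ℝ, ∑ m, (B *ᵥ (W *ᵥ u + b)) m
      = (∑ i, α i * u i) + ∑ d, (∑ m, B m d) * b d := by
    intro u
    have h1 : ∀ x : Fin D' → ℝ, ∑ m, (B *ᵥ x) m = ∑ d, (∑ m, B m d) * x d := by
      intro x
      simp only [mulVec, dotProduct]
      rw [Finset.sum_comm]
      simp [Finset.sum_mul]
    rw [h1]
    simp only [Pi.add_apply, mul_add, Finset.sum_add_distrib, mulVec, dotProduct,
      Finset.mul_sum, Finset.sum_mul, hαdef]
    congr 1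
    rw [Finset.sum_comm]
    apply Finset.sum_congr rfl
    intro i _
    apply Finset.sum_congr rfl
    intro d _
    apply Finset.sum_congr rfl
    intro m _
    ring
  -- membership of an updated vector
  have hupd : ∀ (k : Fin K) (x : ℝ), x ∈ V k →
      ∀ j, Function.update v k x j ∈ V j := by
    intro k x hx j
    rcases eq_or_ne j k with rfl | h
    · simpa using hx
    · simpa [Function.update_of_ne h] using hv j
  -- weighted sum of an updated vector
  have keyA : ∀ (k : Fin K) (x : ℝ),
      (∑ i, α i * Function.update v k x i) - (∑ i, α i * v i) = α k * (x - v k) := by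
    intro k x
    rw [← Finset.sum_sub_distrib]
    rw [Finset.sum_eq_single k]
    · simp; ring
    · intro i _ hi
      simp [Function.update_of_ne hi]
    · simp
  have keyS : ∀ (k : Fin K) (x : ℝ),
      (∑ i, Function.update v k x i) - (∑ i, v i) = x - v k := by
    intro k x
    rw [← Finset.sum_sub_distrib]
    rw [Finset.sum_eq_single k]
    · simp
    · intro i _ hi
      simp [Function.update_of_ne hi]
    · simp
  have hmax : ∀ k, v k ≤ (V k).max' (hne k) := fun k => Finset.le_max' _ _ (hv k)
  -- (i) → (ii)
  have h12 : (∀ u : Fin K → ℝ, (∀ k, u k ∈ V k) →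
      ∑ m, (B *ᵥ (W *ᵥ u + b)) m ≤ ∑ m, (B *ᵥ (W *ᵥ v + b)) m) →
      ∀ k, v k = (V k).max' (hne k) := by
    intro h k
    refine le_antisymm (hmax k) ?_
    have hmem := (V k).max'_mem (hne k)
    have := h (Function.update v k ((V k).max' (hne k))) (hupd k _ hmem)
    rw [expand, expand] at this
    have h2 : α k * ((V k).max' (hne k) - v k) ≤ 0 := by
      have := sub_nonpos.mpr (by linarith : (∑ i, α i * Function.update v k ((V k).max' (hne k)) i) ≤ ∑ i, α i * v i)
      rw [keyA] at this; linarith [keyA k ((V k).max' (hne k))]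
    nlinarith [hα k, hmax k]
  -- (ii) → (i)
  have h21 : (∀ k, v k = (V k).max' (hne k)) →
      ∀ u : Fin K → ℝ, (∀ k, u k ∈ V k) →
      ∑ m, (B *ᵥ (W *ᵥ u + b)) m ≤ ∑ m, (B *ᵥ (W *ᵥ v + b)) m := by
    intro h u hu
    rw [expand, expand]
    have : ∀ i, α i * u i ≤ α i * v i := by
      intro i
      have : u i ≤ v i := (h i) ▸ Finset.le_max' _ _ (hu i)
      exact mul_le_mul_of_nonneg_left this (le_of_lt (hα i))
    have h2 : (∑ i, α i * u i) ≤ ∑ i, α i * v i :=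
      Finset.sum_le_sum (fun i _ => this i)
    linarith
  -- (ii) → (iii)
  have h23 : (∀ k, v k = (V k).max' (hne k)) →
      ∀ u : Fin K → ℝ, (∀ k, u k ∈ V k) → ∑ k, u k ≤ ∑ k, v k := by
    intro h u hu
    apply Finset.sum_le_sum
    intro i _
    exact (h i) ▸ Finset.le_max' _ _ (hu i)
  -- (iii) → (ii)
  have h32 : (∀ u : Fin K → ℝ, (∀ k, u k ∈ V k) → ∑ k, u k ≤ ∑ k, v k) →
      ∀ k, v k = (V k).max' (hne k) := by
    intro h k
    refine le_antisymm (hmax k) ?_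
    have hmem := (V k).max'_mem (hne k)
    have := h (Function.update v k ((V k).max' (hne k))) (hupd k _ hmem)
    have := keyS k ((V k).max' (hne k))
    linarith
  exact ⟨⟨h12, h21⟩, ⟨h23, h32⟩⟩
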